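/- arXiv:2505.20022 — 3 statements merged into one kernel-verified Lean document; each statement's English description precedes it below -/
import Mathlib

section
/- Suppose the eigenvalue sequence satisfies μ_j ≤ C j^{-2α} for all j ≥ 1 with α > 1/2. Then the kernel complexity R(δ)² = n^{-1} Σ_{j=1}^∞ min{δ, μ_j} satisfies R(δ)² ≤ C_α δ^{(2α-1)/(2α)}/n for all 0 < δ ≤ 1/√n, where C_α depends only on C and α; consequently the fixed point δ_n of R satisfies δ_n ≤ C'_α n^{-2α/(2α+1)}. -/
lemma tail_sum_rpow_le (p : ℝ) (hp : 1 < p) (x₀ : ℝ) (hx₀ : 1 ≤ x₀) (m : ℕ) :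
    ∑ i ∈ Finset.range m, (x₀ + (i + 1 : ℕ)) ^ (-p) ≤ x₀ ^ (1 - p) / (p - 1) := by
  have hx0 : (0:ℝ) < x₀ := lt_of_lt_of_le one_pos hx₀
  have hanti : AntitoneOn (fun x : ℝ => x ^ (-p)) (Set.Icc x₀ (x₀ + m)) := by
    intro a ha b hb hab
    exact Real.rpow_le_rpow_of_nonpos (lt_of_lt_of_le hx0 ha.1) hab (by linarith)
  have h1 := hanti.sum_le_integral
  have h2 : ∫ x in x₀..(x₀ + m), x ^ (-p) =
      ((x₀ + m) ^ (-p + 1) - x₀ ^ (-p + 1)) / (-p + 1) := by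
    apply integral_rpow
    right
    refine ⟨by intro h; linarith, ?_⟩
    rw [Set.uIcc_of_le (le_add_of_nonneg_right (Nat.cast_nonneg m))]
    intro h
    linarith [h.1]
  calc ∑ i ∈ Finset.range m, (x₀ + (i + 1 : ℕ)) ^ (-p) ≤ ∫ x in x₀..(x₀ + m), x ^ (-p) := h1
    _ = (x₀ ^ (-p + 1) - (x₀ + m) ^ (-p + 1)) / (p - 1) := by
        rw [h2, div_eq_div_iff (by linarith) (by linarith : (0:ℝ) < p - 1).ne']
        ring
    _ ≤ x₀ ^ (1 - p) / (p - 1) := by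
        have hpos : (0:ℝ) ≤ (x₀ + m) ^ (-p + 1) := Real.rpow_nonneg (by positivity) _
        have h1p : (1 : ℝ) - p = -p + 1 := by ring
        rw [h1p]
        apply div_le_div_of_nonneg_right ?_ (by linarith)
        linarith

set_option maxHeartbeats 1000000 in
/-- Polynomially decaying eigenvalues: if `μ j ≤ C j^(-2α)` for all `j ≥ 1` with `α > 1/2`,
then the kernel complexity `R(δ)² = n⁻¹ ∑ min δ (μ j)` satisfies
`R(δ)² ≤ Cα δ^((2α-1)/(2α)) / n` for all `0 < δ ≤ 1/√n`, where `Cα` depends only on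
`C` and `α`; consequently any positive fixed point `δₙ` of `R` satisfies
`δₙ ≤ C'α n^(-2α/(2α+1))`. -/
theorem kernel_complexity_poly_decay (C α : ℝ) (hC : 0 < C) (hα : 1 / 2 < α) :
    ∃ Cα C'α : ℝ, 0 < Cα ∧ 0 < C'α ∧
      ∀ (n : ℕ), 0 < n → ∀ (μ : ℕ → ℝ), (∀ j, 0 ≤ μ j) → Antitone μ → Summable μ →
      (∀ j : ℕ, 1 ≤ j → μ j ≤ C * (j : ℝ) ^ (-(2 * α))) →
      ∀ (R : ℝ → ℝ), (∀ δ : ℝ, R δ = Real.sqrt ((n : ℝ)⁻¹ * ∑' j, min δ (μ j))) →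
      (∀ δ : ℝ, 0 < δ → δ ≤ 1 / Real.sqrt n →
        R δ ^ 2 ≤ Cα * δ ^ ((2 * α - 1) / (2 * α)) / n) ∧
      (∀ δn : ℝ, 0 < δn → R δn = δn → δn ≤ C'α * (n : ℝ) ^ (-(2 * α) / (2 * α + 1))) := by
  set p : ℝ := 2 * α with hpdef
  have hp : 1 < p := by simp only [hpdef]; linarith
  have hp0 : 0 < p := by linarith
  have hp1 : (0:ℝ) < p - 1 := by linarith
  have hCp : 0 < C / (p - 1) := div_pos hC hp1
  set θ : ℝ := (p - 1) / p with hθdef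
  have hθ0 : 0 < θ := div_pos hp1 hp0
  have hθ1 : θ < 1 := by rw [hθdef, div_lt_one hp0]; linarith
  set K : ℝ := 2 + C / (p - 1) with hKdef
  have hK0 : 0 < K := by rw [hKdef]; linarith
  set Cα : ℝ := 1 + K with hCαdef
  have hCα1 : 1 ≤ Cα := by rw [hCαdef]; linarith
  set M : ℝ := C + C / (p - 1) with hMdef
  have hM0 : 0 < M := by rw [hMdef]; linarith
  refine ⟨Cα, Cα + 1 + M, by linarith, by linarith, ?_⟩
  intro n hn μ hμ0 hμanti hμsum hμdecay R hR
  have hn1 : (1:ℝ) ≤ n := by exact_mod_cast hn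
  -- summability of the truncated sequence
  have hmin_sum : ∀ δ : ℝ, 0 < δ → Summable (fun j => min δ (μ j)) := by
    intro δ hδ
    exact Summable.of_nonneg_of_le (fun j => le_min hδ.le (hμ0 j)) (fun j => min_le_right _ _)
      hμsum
  -- the key bound on the sum for δ ≤ 1
  have key : ∀ δ : ℝ, 0 < δ → δ ≤ 1 → (∑' j, min δ (μ j)) ≤ Cα * δ ^ θ := by
    intro δ hδ hδ1
    have hδθ : δ ≤ δ ^ θ := by
      nth_rewrite 1 [show δ = δ ^ (1:ℝ) from (Real.rpow_one δ).symm]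
      exact Real.rpow_le_rpow_of_exponent_ge hδ hδ1 hθ1.le
    have hsum := hmin_sum δ hδ
    have hsum1 : Summable (fun j => min δ (μ (j + 1))) := (summable_nat_add_iff 1).2 hsum
    -- split off the first term
    have hsplit0 : (∑' j, min δ (μ j)) = min δ (μ 0) + ∑' j, min δ (μ (j + 1)) := by
      rw [← Summable.sum_add_tsum_nat_add 1 hsum, Finset.sum_range_one]
    -- the cutoff
    set d : ℕ := ⌈δ ^ (-1 / p)⌉₊ with hddef
    have hδp : (0:ℝ) < δ ^ (-1 / p) := Real.rpow_pos_of_pos hδ _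
    have hd1 : 1 ≤ d := Nat.one_le_ceil_iff.2 hδp
    have hdlow : δ ^ (-1 / p) ≤ (d:ℝ) := Nat.le_ceil _
    have hdhigh : (d:ℝ) ≤ δ ^ (-1 / p) + 1 := (Nat.ceil_lt_add_one hδp.le).le
    have hd1r : (1:ℝ) ≤ (d:ℝ) := by exact_mod_cast hd1
    -- split the shifted sum at d
    have hsplit1 : (∑' j, min δ (μ (j + 1))) =
        (∑ j ∈ Finset.range d, min δ (μ (j + 1))) + ∑' j, min δ (μ (j + d + 1)) := by
      rw [← Summable.sum_add_tsum_nat_add d hsum1]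
    -- head bound
    have hhead : (∑ j ∈ Finset.range d, min δ (μ (j + 1))) ≤ 2 * δ ^ θ := by
      calc (∑ j ∈ Finset.range d, min δ (μ (j + 1)))
          ≤ ∑ _j ∈ Finset.range d, δ := Finset.sum_le_sum (fun j _ => min_le_left _ _)
        _ = (d:ℝ) * δ := by rw [Finset.sum_const, Finset.card_range]; ring
        _ ≤ (δ ^ (-1 / p) + 1) * δ := by
            apply mul_le_mul_of_nonneg_right hdhigh hδ.le
        _ = δ ^ (-1 / p) * δ ^ (1:ℝ) + δ := by rw [Real.rpow_one]; ring
        _ = δ ^ (-1 / p + 1) + δ := by rw [← Real.rpow_add hδ]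
        _ ≤ δ ^ θ + δ ^ θ := by
            have heq : (-1 / p + 1 : ℝ) = θ := by
              rw [hθdef]; field_simp; ring
            rw [heq]
            linarith
        _ = 2 * δ ^ θ := by ring
    -- tail bound
    have htail : (∑' j, min δ (μ (j + d + 1))) ≤ C / (p - 1) * δ ^ θ := by
      apply Real.tsum_le_of_sum_range_le (fun j => le_min hδ.le (hμ0 _))
      intro m
      have hterm : ∀ j : ℕ, min δ (μ (j + d + 1)) ≤ C * ((d:ℝ) + (j + 1:ℕ)) ^ (-p) := by
        intro j
        refine le_trans (min_le_right _ _) ?_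
        have hcast : ((d:ℝ) + ((j + 1 : ℕ):ℝ)) = ((j + d + 1 : ℕ) : ℝ) := by push_cast; ring
        rw [hcast]
        exact hμdecay _ (by omega)
      calc (∑ j ∈ Finset.range m, min δ (μ (j + d + 1)))
          ≤ ∑ j ∈ Finset.range m, C * ((d:ℝ) + (j + 1:ℕ)) ^ (-p) :=
            Finset.sum_le_sum (fun j _ => hterm j)
        _ = C * ∑ j ∈ Finset.range m, ((d:ℝ) + (j + 1:ℕ)) ^ (-p) := by
            rw [Finset.mul_sum]
        _ ≤ C * ((d:ℝ) ^ (1 - p) / (p - 1)) := by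
            apply mul_le_mul_of_nonneg_left (tail_sum_rpow_le p hp _ hd1r m) hC.le
        _ ≤ C / (p - 1) * δ ^ θ := by
            have hdp : (d:ℝ) ^ (1 - p) ≤ δ ^ θ := by
              calc (d:ℝ) ^ (1 - p) ≤ (δ ^ (-1 / p)) ^ (1 - p) :=
                    Real.rpow_le_rpow_of_nonpos hδp hdlow (by linarith)
                _ = δ ^ (-1 / p * (1 - p)) := by
                    rw [← Real.rpow_mul hδ.le]
                _ = δ ^ θ := by
                    congr 1
                    rw [hθdef]; field_simp; try ring
            calc C * ((d:ℝ) ^ (1 - p) / (p - 1)) = C / (p - 1) * (d:ℝ) ^ (1 - p) := by ring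
              _ ≤ C / (p - 1) * δ ^ θ := mul_le_mul_of_nonneg_left hdp hCp.le
    calc (∑' j, min δ (μ j)) = min δ (μ 0) + ∑' j, min δ (μ (j + 1)) := hsplit0
      _ ≤ δ ^ θ + (2 * δ ^ θ + C / (p - 1) * δ ^ θ) := by
          rw [hsplit1]
          gcongr
          · exact le_trans (min_le_left _ _) hδθ
      _ = Cα * δ ^ θ := by rw [hCαdef, hKdef]; ring
  -- bound on the full eigenvalue sum (for large fixed points)
  have hfull : (∑' j, μ (j + 1)) ≤ M := by
    apply Real.tsum_le_of_sum_range_le (fun j => hμ0 _)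
    intro m
    match m with
    | 0 => simp [hM0.le]
    | Nat.succ m =>
      rw [Finset.sum_range_succ']
      have h0 : μ (0 + 1) ≤ C := by
        have := hμdecay 1 le_rfl
        simpa using this
      have h1 : (∑ i ∈ Finset.range m, μ (i + 1 + 1)) ≤ C / (p - 1) := by
        calc (∑ i ∈ Finset.range m, μ (i + 1 + 1))
            ≤ ∑ i ∈ Finset.range m, C * ((1:ℝ) + (i + 1:ℕ)) ^ (-p) := by
              apply Finset.sum_le_sum
              intro i _
              have hcast : ((1:ℝ) + ((i + 1 : ℕ):ℝ)) = ((i + 1 + 1 : ℕ) : ℝ) := by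
                push_cast; ring
              rw [hcast]
              exact hμdecay _ (by omega)
          _ = C * ∑ i ∈ Finset.range m, ((1:ℝ) + (i + 1:ℕ)) ^ (-p) := by rw [Finset.mul_sum]
          _ ≤ C * ((1:ℝ) ^ (1 - p) / (p - 1)) :=
              mul_le_mul_of_nonneg_left (tail_sum_rpow_le p hp 1 le_rfl m) hC.le
          _ = C / (p - 1) := by rw [Real.one_rpow]; ring
      rw [hMdef]; linarith
  -- nonnegativity of the argument of sqrt
  have harg : ∀ δ : ℝ, 0 < δ → 0 ≤ (n : ℝ)⁻¹ * ∑' j, min δ (μ j) := by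
    intro δ hδ
    apply mul_nonneg (by positivity)
    exact tsum_nonneg (fun j => le_min hδ.le (hμ0 j))
  have hRsq : ∀ δ : ℝ, 0 < δ → R δ ^ 2 = (n : ℝ)⁻¹ * ∑' j, min δ (μ j) := by
    intro δ hδ
    rw [hR δ, Real.sq_sqrt (harg δ hδ)]
  constructor
  · -- part 1
    intro δ hδ hδn
    have hδ1 : δ ≤ 1 := by
      have h1 : (1:ℝ) ≤ Real.sqrt n := by
        rw [show (1:ℝ) = Real.sqrt 1 from (Real.sqrt_one).symm]
        exact Real.sqrt_le_sqrt hn1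
      calc δ ≤ 1 / Real.sqrt n := hδn
        _ ≤ 1 := by
            rw [div_le_one (by linarith)]
            exact h1
    rw [hRsq δ hδ]
    rw [div_eq_inv_mul]
    exact mul_le_mul_of_nonneg_left (key δ hδ hδ1) (by positivity)
  · -- part 2
    intro δn hδn hfix
    have hq : (-p / (p + 1) : ℝ) = -(p / (p + 1)) := by ring
    rw [hq]
    have hsq := hRsq δn hδn
    rw [hfix] at hsq
    have hnq : (n:ℝ) ^ (-(1:ℝ)) ≤ (n:ℝ) ^ (-(p / (p + 1))) := by
      apply Real.rpow_le_rpow_of_exponent_le hn1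
      rw [neg_le_neg_iff, div_le_one (by linarith)]
      linarith
    have hnqpos : (0:ℝ) < (n:ℝ) ^ (-(p / (p + 1))) := Real.rpow_pos_of_pos (by linarith) _
    rcases le_or_gt δn 1 with hle | hgt
    · -- small fixed point
      have h1 : δn ^ 2 ≤ Cα / n * δn ^ θ := by
        rw [hsq]
        calc (n : ℝ)⁻¹ * ∑' j, min δn (μ j) ≤ (n : ℝ)⁻¹ * (Cα * δn ^ θ) :=
              mul_le_mul_of_nonneg_left (key δn hδn hle) (by positivity)
          _ = Cα / n * δn ^ θ := by ring
      have hδθpos : (0:ℝ) < δn ^ θ := Real.rpow_pos_of_pos hδn _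
      have e1 : δn ^ ((2:ℝ) - θ) * δn ^ θ = δn ^ 2 := by
        rw [← Real.rpow_add hδn, show (2:ℝ) - θ + θ = ((2:ℕ):ℝ) by push_cast; ring,
          Real.rpow_natCast]
      have h2 : δn ^ ((2:ℝ) - θ) ≤ Cα / n := by
        have h1' : δn ^ ((2:ℝ) - θ) * δn ^ θ ≤ Cα / n * δn ^ θ := by rw [e1]; exact h1
        exact le_of_mul_le_mul_right h1' hδθpos
      have h2θpos : (0:ℝ) < 2 - θ := by linarith
      have h3 : δn ≤ (Cα / n) ^ ((2 - θ)⁻¹ : ℝ) := by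
        have := Real.rpow_le_rpow (Real.rpow_nonneg hδn.le _) h2 (by positivity :
          (0:ℝ) ≤ ((2:ℝ) - θ)⁻¹)
        rwa [← Real.rpow_mul hδn.le, mul_inv_cancel₀ h2θpos.ne', Real.rpow_one] at this
      have h2θ : (2:ℝ) - θ = (p + 1) / p := by
        rw [hθdef]; field_simp; ring
      have hexp : ((2:ℝ) - θ)⁻¹ = p / (p + 1) := by rw [h2θ, inv_div]
      calc δn ≤ (Cα / n) ^ ((2 - θ)⁻¹ : ℝ) := h3
        _ = Cα ^ ((2 - θ)⁻¹ : ℝ) * (n:ℝ) ^ (-(((2:ℝ) - θ)⁻¹)) := by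
            rw [Real.div_rpow (by linarith) (by linarith), Real.rpow_neg (by linarith),
              div_eq_mul_inv]
        _ ≤ (Cα + 1 + M) * (n:ℝ) ^ (-(p / (p + 1))) := by
            rw [hexp]
            apply mul_le_mul_of_nonneg_right ?_ hnqpos.le
            calc Cα ^ (p / (p + 1) : ℝ) ≤ Cα ^ (1:ℝ) := by
                  apply Real.rpow_le_rpow_of_exponent_le hCα1
                  rw [div_le_one (by linarith)]; linarith
              _ = Cα := Real.rpow_one _
              _ ≤ Cα + 1 + M := by linarith
    · -- large fixed point
      have hδsum : (∑' j, min δn (μ j)) ≤ δn + M := by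
        have hsum := hmin_sum δn hδn
        have hs1 : Summable (fun j => min δn (μ (j + 1))) := (summable_nat_add_iff 1).2 hsum
        have hs2 : Summable (fun j => μ (j + 1)) := (summable_nat_add_iff 1).2 hμsum
        have ht : (∑' j, min δn (μ (j + 1))) ≤ ∑' j, μ (j + 1) :=
          Summable.tsum_le_tsum (fun j => min_le_right _ _) hs1 hs2
        have h0 : min δn (μ 0) ≤ δn := min_le_left _ _
        rw [← Summable.sum_add_tsum_nat_add 1 hsum, Finset.sum_range_one]
        exact add_le_add h0 (le_trans ht hfull)
      have hnpos : (0:ℝ) < n := by linarith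
      have h1 : δn ^ 2 * n ≤ δn + M := by
        calc δn ^ 2 * n = (n : ℝ)⁻¹ * (∑' j, min δn (μ j)) * n := by rw [hsq]
          _ = ∑' j, min δn (μ j) := by field_simp
          _ ≤ δn + M := hδsum
      have h2 : δn ≤ (1 + M) / n := by
        rw [le_div_iff₀ hnpos]
        nlinarith [h1, mul_nonneg (sub_pos.2 hgt).le hM0.le, mul_pos hδn hnpos,
          mul_pos (mul_pos hδn hδn) hnpos]
      calc δn ≤ (1 + M) / n := h2
        _ = (1 + M) * (n:ℝ) ^ (-(1:ℝ)) := by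
            rw [Real.rpow_neg_one, div_eq_mul_inv]
        _ ≤ (Cα + 1 + M) * (n:ℝ) ^ (-(p / (p + 1))) := by
            apply mul_le_mul (by linarith) hnq (by positivity) (by linarith)
end

section
/- Suppose μ_j ≤ exp(-γ j) for all j ≥ 1 with γ > 0. Then for any 0 < δ ≤ 1/√n, the statistical dimension d(δ) = max{j ≥ 0 : μ_j ≥ δ} satisfies d(δ) + 1 ≤ γ^{-1} log(C/δ) for some constant C, and the kernel complexity R(δ)² = n^{-1} Σ_j min{δ, μ_j} satisfies R(δ)² ≤ C'' (δ/n) log(1/δ); consequently the fixed point δ_n of R satisfies δ_n ≤ C''' (log n)/n. -/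
set_option maxHeartbeats 1000000
open Real Finset

private lemma min_summable {μ : ℕ → ℝ} (hμ0 : ∀ j, 0 ≤ μ j) (hsum : Summable μ) (δ : ℝ)
    (hδ : 0 ≤ δ) : Summable (fun j => min δ (μ j)) :=
  hsum.of_nonneg_of_le (fun j => le_min hδ (hμ0 j)) (fun j => min_le_right _ _)

/-- Crude bound, valid for `δ ≥ 1`. -/
private lemma sum_min_crude (γ : ℝ) (hγ : 0 < γ) (μ : ℕ → ℝ) (hμ0 : ∀ j, 0 ≤ μ j)
    (hsum : Summable μ) (hdec : ∀ j : ℕ, 1 ≤ j → μ j ≤ Real.exp (-γ * j))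
    (δ : ℝ) (hδ : 1 ≤ δ) :
    ∑' j, min δ (μ j) ≤ δ * (1 - Real.exp (-γ))⁻¹ := by
  have hr0 : 0 ≤ Real.exp (-γ) := (Real.exp_pos _).le
  have hr1 : Real.exp (-γ) < 1 := Real.exp_lt_one_iff.mpr (by linarith)
  have hgeo : Summable (fun j : ℕ => δ * Real.exp (-γ) ^ j) :=
    (summable_geometric_of_lt_one hr0 hr1).mul_left δ
  have hterm : ∀ j : ℕ, min δ (μ j) ≤ δ * Real.exp (-γ) ^ j := by
    intro j
    rcases Nat.eq_zero_or_pos j with h0 | h1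
    · subst h0; simpa using min_le_left δ (μ 0)
    · calc min δ (μ j) ≤ μ j := min_le_right _ _
        _ ≤ Real.exp (-γ * j) := hdec j h1
        _ = Real.exp (-γ) ^ j := by
            rw [← Real.exp_nat_mul]; ring_nf
        _ ≤ δ * Real.exp (-γ) ^ j := le_mul_of_one_le_left (pow_nonneg hr0 _) hδ
  calc ∑' j, min δ (μ j) ≤ ∑' j : ℕ, δ * Real.exp (-γ) ^ j :=
        Summable.tsum_le_tsum hterm (min_summable hμ0 hsum δ (by linarith)) hgeo
    _ = δ * (1 - Real.exp (-γ))⁻¹ := by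
        rw [tsum_mul_left, tsum_geometric_of_lt_one hr0 hr1]

/-- Refined bound, valid for `0 < δ ≤ 1`. -/
private lemma sum_min_bound (γ : ℝ) (hγ : 0 < γ) (μ : ℕ → ℝ) (hμ0 : ∀ j, 0 ≤ μ j)
    (hsum : Summable μ) (hdec : ∀ j : ℕ, 1 ≤ j → μ j ≤ Real.exp (-γ * j))
    (δ : ℝ) (hδ : 0 < δ) (hδ1 : δ ≤ 1) :
    ∑' j, min δ (μ j) ≤ δ * ((2 + (1 - Real.exp (-γ))⁻¹) + γ⁻¹ * Real.log (1/δ)) := by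
  have hr0 : 0 ≤ Real.exp (-γ) := (Real.exp_pos _).le
  have hr1 : Real.exp (-γ) < 1 := Real.exp_lt_one_iff.mpr (by linarith)
  set L : ℝ := γ⁻¹ * Real.log (1/δ) with hLdef
  have hlog0 : 0 ≤ Real.log (1/δ) := Real.log_nonneg (by rw [le_div_iff₀ hδ]; linarith)
  have hL0 : 0 ≤ L := mul_nonneg (inv_nonneg.mpr hγ.le) hlog0
  set J : ℕ := ⌈L⌉₊ with hJdef
  have hJL : L ≤ (J : ℝ) := Nat.le_ceil L
  have hJle : (J : ℝ) ≤ L + 1 := (Nat.ceil_lt_add_one hL0).le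
  have hms := min_summable hμ0 hsum δ hδ.le
  have hsplit := Summable.sum_add_tsum_nat_add (f := fun j => min δ (μ j)) (J+1) hms
  rw [← hsplit]
  -- head
  have hhead : (∑ i ∈ Finset.range (J+1), min δ (μ i)) ≤ (J + 1 : ℝ) * δ := by
    have := Finset.sum_le_card_nsmul (Finset.range (J+1)) (fun i => min δ (μ i)) δ
      (fun x _ => min_le_left _ _)
    simpa [Finset.card_range, nsmul_eq_mul] using this
  -- tail
  have hexpJ : Real.exp (-γ * (J+1)) ≤ δ := by
    have h1 : -γ * (J+1) ≤ -Real.log (1/δ) := by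
      have : Real.log (1/δ) ≤ γ * (J+1) := by
        have : Real.log (1/δ) = γ * L := by
          rw [hLdef, ← mul_assoc, mul_inv_cancel₀ hγ.ne', one_mul]
        rw [this]
        have : (J:ℝ) + 1 ≥ L := by linarith
        nlinarith [hγ.le]
      linarith
    calc Real.exp (-γ * (J+1)) ≤ Real.exp (-Real.log (1/δ)) := Real.exp_le_exp.mpr h1
      _ = δ := by rw [Real.exp_neg, Real.exp_log (by positivity)]; simp
  have htail : (∑' i : ℕ, min δ (μ (i + (J+1)))) ≤ δ * (1 - Real.exp (-γ))⁻¹ := by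
    have hgeo : Summable (fun i : ℕ => δ * Real.exp (-γ) ^ i) :=
      (summable_geometric_of_lt_one hr0 hr1).mul_left δ
    have hterm : ∀ i : ℕ, min δ (μ (i + (J+1))) ≤ δ * Real.exp (-γ) ^ i := by
      intro i
      calc min δ (μ (i + (J+1))) ≤ μ (i + (J+1)) := min_le_right _ _
        _ ≤ Real.exp (-γ * (i + (J+1) : ℕ)) := hdec _ (by omega)
        _ = Real.exp (-γ) ^ i * Real.exp (-γ * (J+1)) := by
            rw [← Real.exp_nat_mul, ← Real.exp_add]
            push_cast
            ring_nf
        _ ≤ Real.exp (-γ) ^ i * δ := by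
            exact mul_le_mul_of_nonneg_left hexpJ (pow_nonneg hr0 _)
        _ = δ * Real.exp (-γ) ^ i := mul_comm _ _
    calc (∑' i : ℕ, min δ (μ (i + (J+1)))) ≤ ∑' i : ℕ, δ * Real.exp (-γ) ^ i :=
          Summable.tsum_le_tsum hterm ((summable_nat_add_iff (J+1)).mpr hms) hgeo
      _ = δ * (1 - Real.exp (-γ))⁻¹ := by
          rw [tsum_mul_left, tsum_geometric_of_lt_one hr0 hr1]
  have : (J + 1 : ℝ) * δ ≤ (L + 2) * δ := by nlinarith
  nlinarith [htail, hhead]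

/-- Exponentially decaying eigenvalues: if `μ j ≤ exp (-γ j)` for all `j ≥ 1` with `γ > 0`,
then there are constants `C, C'', C''' > 0` (depending only on `γ`) such that for any
`0 < δ ≤ 1/√n`: the statistical dimension bound `j + 1 ≤ γ⁻¹ log (C/δ)` holds for every
`j ≥ 1` with `μ j ≥ δ`, and `R(δ)² = n⁻¹ ∑ min δ (μ j) ≤ C'' (δ/n) log (1/δ)`;
consequently any positive fixed point `δₙ` of `R` satisfies `δₙ ≤ C''' (log n)/n`. -/
theorem kernel_complexity_exp_decay (γ : ℝ) (hγ : 0 < γ) :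
    ∃ C C'' C''' : ℝ, 0 < C ∧ 0 < C'' ∧ 0 < C''' ∧
      ∀ (n : ℕ), 2 ≤ n → ∀ (μ : ℕ → ℝ), (∀ j, 0 ≤ μ j) → Antitone μ → Summable μ →
      (∀ j : ℕ, 1 ≤ j → μ j ≤ Real.exp (-γ * j)) →
      ∀ (R : ℝ → ℝ), (∀ δ : ℝ, R δ = Real.sqrt ((n : ℝ)⁻¹ * ∑' j, min δ (μ j))) →
      (∀ δ : ℝ, 0 < δ → δ ≤ 1 / Real.sqrt n →
        (∀ j : ℕ, 1 ≤ j → δ ≤ μ j → (j : ℝ) + 1 ≤ γ⁻¹ * Real.log (C / δ)) ∧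
        R δ ^ 2 ≤ C'' * (δ / n) * Real.log (1 / δ)) ∧
      (∀ δn : ℝ, 0 < δn → R δn = δn → δn ≤ C''' * Real.log n / n) := by
  set K : ℝ := (1 - Real.exp (-γ))⁻¹ with hKdef
  have hr1 : Real.exp (-γ) < 1 := Real.exp_lt_one_iff.mpr (by linarith)
  have h0 : 0 < 1 - Real.exp (-γ) := by linarith
  have hKpos : 0 < K := by rw [hKdef]; exact inv_pos.mpr h0
  have hKe : (1 - Real.exp (-γ)) * K = 1 := by rw [hKdef]; exact mul_inv_cancel₀ h0.ne'
  have hK1 : 1 ≤ K := by nlinarith [Real.exp_pos (-γ)]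
  have hγi : 0 < γ⁻¹ := inv_pos.mpr hγ
  have hγγ : γ⁻¹ * γ = 1 := inv_mul_cancel₀ hγ.ne'
  refine ⟨Real.exp γ, γ⁻¹ + 4 * (2 + K), γ⁻¹ + 6 + 4 * K, Real.exp_pos _, by positivity,
    by positivity, ?_⟩
  intro n hn μ hμ0 hμanti hμsum hμdec R hR
  have hn0 : (0:ℝ) < n := by positivity
  have hn2 : (2:ℝ) ≤ n := by exact_mod_cast hn
  have hlogn : (1:ℝ)/2 < Real.log n := by
    have h2 : Real.log 2 ≤ Real.log n := Real.log_le_log (by norm_num) hn2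
    have := Real.log_two_gt_d9
    linarith
  constructor
  · intro δ hδ hδn
    have hsq2 : (1:ℝ) < Real.sqrt n := by
      have : (1:ℝ) < Real.sqrt 2 := by
        rw [show (1:ℝ) = Real.sqrt 1 by simp]
        exact Real.sqrt_lt_sqrt (by norm_num) (by norm_num)
      calc (1:ℝ) < Real.sqrt 2 := this
        _ ≤ Real.sqrt n := Real.sqrt_le_sqrt hn2
    have hδ1 : δ ≤ 1 := by
      have : 1 / Real.sqrt n < 1 := by
        rw [div_lt_one (by linarith)]; exact hsq2
      linarith
    have hlogδ : Real.log n / 2 ≤ Real.log (1/δ) := by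
      have h1 : Real.sqrt n ≤ 1/δ := by
        rw [le_div_iff₀ hδ, mul_comm]
        exact (le_div_iff₀ (by linarith : (0:ℝ) < Real.sqrt n)).mp hδn
      calc Real.log n / 2 = Real.log (Real.sqrt n) := (Real.log_sqrt hn0.le).symm
        _ ≤ Real.log (1/δ) := Real.log_le_log (by positivity) h1
    have hlogδ4 : (1:ℝ)/4 ≤ Real.log (1/δ) := by linarith
    constructor
    · intro j hj hδμ
      have hδexp : δ ≤ Real.exp (-γ * j) := hδμ.trans (hμdec j hj)
      have hlog : Real.log δ ≤ -γ * j := (Real.log_le_iff_le_exp hδ).mpr hδexp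
      have hlogC : Real.log (Real.exp γ / δ) = γ - Real.log δ := by
        rw [Real.log_div (Real.exp_ne_zero γ) hδ.ne', Real.log_exp]
      rw [hlogC]
      have hj0 : (0:ℝ) ≤ j := Nat.cast_nonneg j
      nlinarith [mul_le_mul_of_nonneg_left (neg_le_neg hlog) hγi.le]
    · have hS : ∑' j, min δ (μ j) ≤ δ * ((2 + K) + γ⁻¹ * Real.log (1/δ)) :=
        sum_min_bound γ hγ μ hμ0 hμsum hμdec δ hδ hδ1
      have hS0 : 0 ≤ ∑' j, min δ (μ j) :=
        tsum_nonneg (fun j => le_min hδ.le (hμ0 j))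
      have hRsq : R δ ^ 2 = (n:ℝ)⁻¹ * ∑' j, min δ (μ j) := by
        rw [hR δ, Real.sq_sqrt (by positivity)]
      rw [hRsq]
      have h1 : (n:ℝ)⁻¹ * ∑' j, min δ (μ j) ≤ (n:ℝ)⁻¹ * (δ * ((2 + K) + γ⁻¹ * Real.log (1/δ))) :=
        mul_le_mul_of_nonneg_left hS (by positivity)
      have h2 : (n:ℝ)⁻¹ * (δ * ((2 + K) + γ⁻¹ * Real.log (1/δ)))
          ≤ (γ⁻¹ + 4 * (2 + K)) * (δ / n) * Real.log (1/δ) := by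
        rw [div_eq_mul_inv δ]
        have hd : 0 < δ * (n:ℝ)⁻¹ := by positivity
        nlinarith [mul_le_mul_of_nonneg_left hlogδ4 (mul_nonneg hd.le (by linarith : (0:ℝ) ≤ 2 + K))]
      linarith
  · intro δn hδn hfix
    have hS0 : 0 ≤ ∑' j, min δn (μ j) :=
      tsum_nonneg (fun j => le_min hδn.le (hμ0 j))
    have hδsq : δn ^ 2 = (n:ℝ)⁻¹ * ∑' j, min δn (μ j) := by
      conv_lhs => rw [← hfix]
      rw [hR δn, Real.sq_sqrt (by positivity)]
    rcases le_or_gt 1 δn with hge | hlt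
    · -- crude case
      have hS : ∑' j, min δn (μ j) ≤ δn * K :=
        sum_min_crude γ hγ μ hμ0 hμsum hμdec δn hge
      have h1 : δn ^ 2 ≤ (n:ℝ)⁻¹ * (δn * K) := by
        rw [hδsq]; exact mul_le_mul_of_nonneg_left hS (by positivity)
      have h2 : δn ≤ K / n := by
        rw [div_eq_mul_inv]
        nlinarith [mul_pos hδn hn0]
      have h3 : K / n ≤ (γ⁻¹ + 6 + 4 * K) * Real.log n / n := by
        have : K ≤ (γ⁻¹ + 6 + 4 * K) * Real.log n := by
          nlinarith [mul_le_mul_of_nonneg_left hlogn.le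
            (by positivity : (0:ℝ) ≤ γ⁻¹ + 6 + 4 * K)]
        gcongr
      linarith
    · -- refined case
      have hS : ∑' j, min δn (μ j) ≤ δn * ((2 + K) + γ⁻¹ * Real.log (1/δn)) :=
        sum_min_bound γ hγ μ hμ0 hμsum hμdec δn hδn hlt.le
      have hkey : (n:ℝ) * δn ≤ (2 + K) + γ⁻¹ * Real.log (1/δn) := by
        have h1 : δn ^ 2 ≤ (n:ℝ)⁻¹ * (δn * ((2 + K) + γ⁻¹ * Real.log (1/δn))) := by
          rw [hδsq]; exact mul_le_mul_of_nonneg_left hS (by positivity)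
        have h1' : (n:ℝ) * δn^2 ≤ δn * ((2 + K) + γ⁻¹ * Real.log (1/δn)) := by
          have := mul_le_mul_of_nonneg_left h1 hn0.le
          rwa [← mul_assoc, mul_inv_cancel₀ hn0.ne', one_mul] at this
        nlinarith [h1', hδn]
      by_contra hcon
      push_neg at hcon
      set x : ℝ := (γ⁻¹ + 6 + 4 * K) * Real.log n / n with hxdef
      have hx0 : 0 < x := by positivity
      have hClogn : 1 ≤ (γ⁻¹ + 6 + 4 * K) * Real.log n := by
        nlinarith [mul_le_mul_of_nonneg_left hlogn.le
          (by positivity : (0:ℝ) ≤ γ⁻¹ + 6 + 4 * K)]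
      have hlogx : Real.log x = Real.log ((γ⁻¹ + 6 + 4 * K) * Real.log n) - Real.log n := by
        rw [hxdef, Real.log_div (by positivity) hn0.ne']
      have hlogδlt : Real.log (1/δn) < Real.log n := by
        have h1 : Real.log x < Real.log δn := Real.log_lt_log hx0 hcon
        have h2 : 0 ≤ Real.log ((γ⁻¹ + 6 + 4 * K) * Real.log n) := Real.log_nonneg hClogn
        rw [Real.log_div one_ne_zero hδn.ne', Real.log_one]
        linarith [hlogx ▸ h1]
      have hnx : (γ⁻¹ + 6 + 4 * K) * Real.log n < (n:ℝ) * δn := by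
        have : (n:ℝ) * x = (γ⁻¹ + 6 + 4 * K) * Real.log n := by
          rw [hxdef]; field_simp
        nlinarith
      nlinarith [mul_le_mul_of_nonneg_left hlogδlt.le hγi.le]
end

section
/- Let Φ_1, ..., Φ_n and Φ̂_1, ..., Φ̂_n be elements of ℓ², set Σ = n^{-1} Σ_i Φ_i Φ_i^⊤, δ > 0, and Δ̄ = n^{-1} Σ_i ‖Φ̂_i - Φ_i‖². Then the operator T₁(δ) = n^{-1} Σ_i (Σ + δI)^{-1/2} Φ_i (Φ̂_i - Φ_i)^⊤ (Σ + δI)^{-1/2} satisfies ‖T₁(δ)‖_op ≤ √(Δ̄/δ), and the operator T₂(δ) = n^{-1} Σ_i (Σ + δI)^{-1/2} (Φ̂_i - Φ_i)(Φ̂_i - Φ_i)^⊤ (Σ + δI)^{-1/2} satisfies ‖T₂(δ)‖_op ≤ Δ̄/δ and Tr(T₂(δ)) ≤ Δ̄/δ. -/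
open scoped RealInnerProductSpace

/-- Operator norm bounds for the perturbation terms. With `Sig = n⁻¹ ∑ᵢ Φᵢ Φᵢᵀ`,
`S = (Sig + δI)^{-1/2}` (characterized as the positive self-adjoint operator with
`S² = (Sig + δI)⁻¹`), `Δ̄ = n⁻¹ ∑ᵢ ‖Φ'ᵢ - Φᵢ‖²`, and
`T₁ = n⁻¹ ∑ᵢ S Φᵢ (Φ'ᵢ - Φᵢ)ᵀ S`, `T₂ = n⁻¹ ∑ᵢ S (Φ'ᵢ - Φᵢ)(Φ'ᵢ - Φᵢ)ᵀ S`, one has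
`‖T₁‖ ≤ √(Δ̄/δ)`, `‖T₂‖ ≤ Δ̄/δ`, and `Tr T₂ = n⁻¹ ∑ᵢ ‖S(Φ'ᵢ - Φᵢ)‖² ≤ Δ̄/δ`. -/
theorem perturbation_operator_bounds {E : Type*} [NormedAddCommGroup E]
    [InnerProductSpace ℝ E] [CompleteSpace E]
    (n : ℕ) (hn : 0 < n) (Φ Φ' : Fin n → E) (δ : ℝ) (hδ : 0 < δ)
    (Sig S T₁ T₂ : E →L[ℝ] E)
    (hSig : ∀ v : E, Sig v = (n : ℝ)⁻¹ • ∑ i, ⟪Φ i, v⟫ • Φ i)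
    (hSsa : ∀ u v : E, ⟪S u, v⟫ = ⟪u, S v⟫)
    (hSpos : ∀ v : E, 0 ≤ ⟪S v, v⟫)
    (hS1 : (S * S) * (Sig + δ • 1) = 1)
    (hS2 : (Sig + δ • 1) * (S * S) = 1)
    (Δbar : ℝ) (hΔ : Δbar = (n : ℝ)⁻¹ * ∑ i, ‖Φ' i - Φ i‖ ^ 2)
    (hT₁ : ∀ v : E, T₁ v = (n : ℝ)⁻¹ • ∑ i, ⟪Φ' i - Φ i, S v⟫ • S (Φ i))
    (hT₂ : ∀ v : E, T₂ v = (n : ℝ)⁻¹ • ∑ i, ⟪Φ' i - Φ i, S v⟫ • S (Φ' i - Φ i)) :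
    ‖T₁‖ ≤ Real.sqrt (Δbar / δ) ∧ ‖T₂‖ ≤ Δbar / δ ∧
    (n : ℝ)⁻¹ * ∑ i, ‖S (Φ' i - Φ i)‖ ^ 2 ≤ Δbar / δ := by
  have hn' : (0:ℝ) < (n:ℝ) := by exact_mod_cast hn
  set A : E →L[ℝ] E := Sig + δ • 1 with hA
  -- S commutes with A
  have hcomm : S * A = A * S := by
    calc S * A = (A * (S * S)) * (S * A) := by rw [hS2, one_mul]
    _ = A * ((S * S) * (S * A)) := by rw [mul_assoc]
    _ = A * (S * ((S * S) * A)) := by simp only [← mul_assoc]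
    _ = A * S := by rw [hS1, mul_one]
  have hSAS : S * (A * S) = 1 := by
    rw [← mul_assoc, hcomm, mul_assoc, hS2]
  -- key identity
  have key : ∀ u : E, (n : ℝ)⁻¹ * ∑ i, ⟪Φ i, S u⟫ ^ 2 + δ * ‖S u‖ ^ 2 = ‖u‖ ^ 2 := by
    intro u
    have h1 : ⟪S u, A (S u)⟫ = ‖u‖ ^ 2 := by
      rw [hSsa]
      have h2 : S (A (S u)) = u := by
        have := congrArg (fun T : E →L[ℝ] E => T u) hSAS
        simpa using this
      rw [h2, real_inner_self_eq_norm_sq]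
    have h3 : ⟪S u, A (S u)⟫ = (n : ℝ)⁻¹ * ∑ i, ⟪Φ i, S u⟫ ^ 2 + δ * ‖S u‖ ^ 2 := by
      have hAu : A (S u) = Sig (S u) + δ • (S u) := by
        simp [hA, ContinuousLinearMap.add_apply, ContinuousLinearMap.smul_apply]
      rw [hAu, inner_add_right, hSig, real_inner_smul_right, inner_sum,
        real_inner_smul_right, real_inner_self_eq_norm_sq]
      congr 1
      congr 1
      refine Finset.sum_congr rfl fun i _ => ?_
      rw [real_inner_smul_right, real_inner_comm]
      ring
    rw [← h3, h1]
  have hsum_nonneg : ∀ u : E, 0 ≤ (n : ℝ)⁻¹ * ∑ i, ⟪Φ i, S u⟫ ^ 2 := fun u =>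
    mul_nonneg (by positivity) (Finset.sum_nonneg fun i _ => sq_nonneg _)
  have hSnorm2 : ∀ u : E, ‖S u‖ ^ 2 ≤ ‖u‖ ^ 2 / δ := by
    intro u
    have := key u
    have := hsum_nonneg u
    rw [le_div_iff₀ hδ]
    nlinarith
  have hSnorm : ∀ u : E, ‖S u‖ ≤ ‖u‖ / Real.sqrt δ := by
    intro u
    have h := hSnorm2 u
    have h2 := Real.sqrt_le_sqrt h
    rwa [Real.sqrt_sq (norm_nonneg _), Real.sqrt_div (sq_nonneg _) δ,
      Real.sqrt_sq (norm_nonneg _)] at h2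
  have hΔnonneg : 0 ≤ Δbar := by
    rw [hΔ]; exact mul_nonneg (by positivity) (Finset.sum_nonneg fun i _ => sq_nonneg _)
  have hsumd : ∑ i, ‖Φ' i - Φ i‖ ^ 2 = (n : ℝ) * Δbar := by
    rw [hΔ]; field_simp
  -- third claim
  have third : (n : ℝ)⁻¹ * ∑ i, ‖S (Φ' i - Φ i)‖ ^ 2 ≤ Δbar / δ := by
    have : ∑ i, ‖S (Φ' i - Φ i)‖ ^ 2 ≤ ∑ i : Fin n, ‖Φ' i - Φ i‖ ^ 2 / δ :=
      Finset.sum_le_sum fun i _ => hSnorm2 _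
    rw [← Finset.sum_div, hsumd] at this
    calc (n : ℝ)⁻¹ * ∑ i, ‖S (Φ' i - Φ i)‖ ^ 2 ≤ (n : ℝ)⁻¹ * ((n : ℝ) * Δbar / δ) := by
          exact mul_le_mul_of_nonneg_left this (by positivity)
    _ = Δbar / δ := by field_simp
  -- T₂ bound
  have hT₂bound : ‖T₂‖ ≤ Δbar / δ := by
    apply ContinuousLinearMap.opNorm_le_bound _ (by positivity)
    intro v
    rw [hT₂]
    calc ‖(n : ℝ)⁻¹ • ∑ i, ⟪Φ' i - Φ i, S v⟫ • S (Φ' i - Φ i)‖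
        ≤ (n : ℝ)⁻¹ * ∑ i, ‖⟪Φ' i - Φ i, S v⟫ • S (Φ' i - Φ i)‖ := by
          rw [norm_smul, Real.norm_eq_abs, abs_of_nonneg (by positivity)]
          exact mul_le_mul_of_nonneg_left (norm_sum_le _ _) (by positivity)
    _ ≤ (n : ℝ)⁻¹ * ∑ i : Fin n, ‖Φ' i - Φ i‖ ^ 2 * (‖v‖ / δ) := by
          refine mul_le_mul_of_nonneg_left (Finset.sum_le_sum fun i _ => ?_) (by positivity)
          rw [norm_smul, Real.norm_eq_abs]
          calc |⟪Φ' i - Φ i, S v⟫| * ‖S (Φ' i - Φ i)‖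
              ≤ (‖Φ' i - Φ i‖ * ‖S v‖) * (‖Φ' i - Φ i‖ / Real.sqrt δ) := by
                apply mul_le_mul (abs_real_inner_le_norm _ _) (hSnorm _) (norm_nonneg _)
                  (by positivity)
          _ ≤ (‖Φ' i - Φ i‖ * (‖v‖ / Real.sqrt δ)) * (‖Φ' i - Φ i‖ / Real.sqrt δ) := by
                apply mul_le_mul_of_nonneg_right _ (by positivity)
                exact mul_le_mul_of_nonneg_left (hSnorm _) (norm_nonneg _)
          _ = ‖Φ' i - Φ i‖ ^ 2 * (‖v‖ / (Real.sqrt δ * Real.sqrt δ)) := by ring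
          _ = ‖Φ' i - Φ i‖ ^ 2 * (‖v‖ / δ) := by
                rw [Real.mul_self_sqrt hδ.le]
    _ = Δbar / δ * ‖v‖ := by
          rw [← Finset.sum_mul, hsumd]; field_simp
  -- T₁ bound
  have hT₁bound : ‖T₁‖ ≤ Real.sqrt (Δbar / δ) := by
    have hinner : ∀ u v : E, ⟪u, T₁ v⟫ ≤ Real.sqrt (Δbar / δ) * (‖u‖ * ‖v‖) := by
      intro u v
      have hexpand : ⟪u, T₁ v⟫ = (n : ℝ)⁻¹ * ∑ i, ⟪Φ' i - Φ i, S v⟫ * ⟪Φ i, S u⟫ := by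
        rw [hT₁, real_inner_smul_right, inner_sum]
        congr 1
        refine Finset.sum_congr rfl fun i _ => ?_
        rw [real_inner_smul_right]
        congr 1
        rw [← hSsa u (Φ i), real_inner_comm]
      have hcs : (∑ i, ⟪Φ' i - Φ i, S v⟫ * ⟪Φ i, S u⟫) ^ 2 ≤
          (∑ i, ⟪Φ' i - Φ i, S v⟫ ^ 2) * ∑ i, ⟪Φ i, S u⟫ ^ 2 :=
        Finset.sum_mul_sq_le_sq_mul_sq _ _ _
      have hb : ∑ i, ⟪Φ' i - Φ i, S v⟫ ^ 2 ≤ (n : ℝ) * Δbar * (‖v‖ ^ 2 / δ) := by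
        calc ∑ i, ⟪Φ' i - Φ i, S v⟫ ^ 2 ≤ ∑ i : Fin n, ‖Φ' i - Φ i‖ ^ 2 * ‖S v‖ ^ 2 := by
              refine Finset.sum_le_sum fun i _ => ?_
              have habs := abs_real_inner_le_norm (Φ' i - Φ i) (S v)
              calc ⟪Φ' i - Φ i, S v⟫ ^ 2 = |⟪Φ' i - Φ i, S v⟫| ^ 2 := (sq_abs _).symm
              _ ≤ (‖Φ' i - Φ i‖ * ‖S v‖) ^ 2 := pow_le_pow_left₀ (abs_nonneg _) habs 2
              _ = ‖Φ' i - Φ i‖ ^ 2 * ‖S v‖ ^ 2 := mul_pow _ _ 2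
        _ ≤ (n : ℝ) * Δbar * (‖v‖ ^ 2 / δ) := by
              rw [← Finset.sum_mul, hsumd]
              have := hSnorm2 v
              nlinarith [Finset.sum_nonneg (fun i (_ : i ∈ Finset.univ) =>
                sq_nonneg ‖Φ' i - Φ i‖), hn', hΔnonneg]
      have ha : ∑ i, ⟪Φ i, S u⟫ ^ 2 ≤ (n : ℝ) * ‖u‖ ^ 2 := by
        have hk := key u
        have h2 : 0 ≤ δ * ‖S u‖ ^ 2 := by positivity
        have h5 : (n : ℝ)⁻¹ * ∑ i, ⟪Φ i, S u⟫ ^ 2 ≤ ‖u‖ ^ 2 := by linarith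
        calc ∑ i, ⟪Φ i, S u⟫ ^ 2 = (n : ℝ) * ((n : ℝ)⁻¹ * ∑ i, ⟪Φ i, S u⟫ ^ 2) := by
              field_simp
        _ ≤ (n : ℝ) * ‖u‖ ^ 2 := mul_le_mul_of_nonneg_left h5 hn'.le
      have hsq : ⟪u, T₁ v⟫ ^ 2 ≤ (Δbar / δ) * (‖u‖ * ‖v‖) ^ 2 := by
        rw [hexpand, mul_pow]
        have hbnn : (0:ℝ) ≤ ∑ i, ⟪Φ' i - Φ i, S v⟫ ^ 2 :=
          Finset.sum_nonneg fun i _ => sq_nonneg _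
        have hann : (0:ℝ) ≤ ∑ i, ⟪Φ i, S u⟫ ^ 2 :=
          Finset.sum_nonneg fun i _ => sq_nonneg _
        have h4 : (∑ i, ⟪Φ' i - Φ i, S v⟫ * ⟪Φ i, S u⟫) ^ 2 ≤
            ((n : ℝ) * Δbar * (‖v‖ ^ 2 / δ)) * ((n : ℝ) * ‖u‖ ^ 2) :=
          le_trans hcs (mul_le_mul hb ha hann (by positivity))
        calc ((n : ℝ)⁻¹) ^ 2 * (∑ i, ⟪Φ' i - Φ i, S v⟫ * ⟪Φ i, S u⟫) ^ 2
            ≤ ((n : ℝ)⁻¹) ^ 2 * (((n : ℝ) * Δbar * (‖v‖ ^ 2 / δ)) * ((n : ℝ) * ‖u‖ ^ 2)) :=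
              mul_le_mul_of_nonneg_left h4 (by positivity)
        _ = (Δbar / δ) * (‖u‖ * ‖v‖) ^ 2 := by field_simp
      calc ⟪u, T₁ v⟫ ≤ |⟪u, T₁ v⟫| := le_abs_self _
      _ = Real.sqrt (⟪u, T₁ v⟫ ^ 2) := (Real.sqrt_sq_eq_abs _).symm
      _ ≤ Real.sqrt ((Δbar / δ) * (‖u‖ * ‖v‖) ^ 2) := Real.sqrt_le_sqrt hsq
      _ = Real.sqrt (Δbar / δ) * (‖u‖ * ‖v‖) := by
            rw [Real.sqrt_mul (by positivity), Real.sqrt_sq (by positivity)]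
    apply ContinuousLinearMap.opNorm_le_bound _ (Real.sqrt_nonneg _)
    intro v
    rcases eq_or_lt_of_le (norm_nonneg (T₁ v)) with h0 | h0
    · rw [← h0]; positivity
    · have h := hinner (T₁ v) v
      rw [real_inner_self_eq_norm_sq] at h
      nlinarith
  exact ⟨hT₁bound, hT₂bound, third⟩
end
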